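/- Let G be a finite connected bipartite simple graph with at least 2 vertices and let α be a positive real number. Then μ(G) = α if and only if there exists a function φ from V(G) to the positive real numbers such that for every vertex v of G, (α − d(v))·φ(v) = ∑_{w ∈ N(v)} φ(w), where d(v) is the degree of v and N(v) is the set of neighbours of v. -/

import Mathlib

open Finset

/-- `μ` is the Laplacian spectral radius of `G`, i.e. the largest eigenvalue of the
Laplacian matrix `D(G) - A(G)`. -/
def IsLapSpecRad {V : Type} [Fintype V] (G : SimpleGraph V) (μ : ℝ) : Prop :=
  letI := Classical.decEq V
  letI := Classical.decRel G.Adj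
  μ ∈ spectrum ℝ (G.lapMatrix ℝ) ∧ ∀ x ∈ spectrum ℝ (G.lapMatrix ℝ), x ≤ μ

/-- The maximum degree of a finite simple graph. -/
noncomputable def maxDeg {V : Type} [Fintype V] (G : SimpleGraph V) : ℕ :=
  letI := Classical.decRel G.Adj
  G.maxDegree



open Finset Matrix
set_option linter.unusedSectionVars false

section Aux

variable {V : Type} [Fintype V] [DecidableEq V]

lemma mem_spectrum_iff' (M : Matrix V V ℝ) (x : ℝ) :
    x ∈ spectrum ℝ M ↔ ∃ v : V → ℝ, v ≠ 0 ∧ M *ᵥ v = x • v := by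
  rw [← AlgEquiv.spectrum_eq (Matrix.toLinAlgEquiv (Pi.basisFun ℝ V)),
      ← Module.End.hasEigenvalue_iff_mem_spectrum]
  have hco : ∀ w : V → ℝ, (Matrix.toLinAlgEquiv (Pi.basisFun ℝ V) M) w = M *ᵥ w := by
    intro w
    rw [Matrix.toLinAlgEquiv_apply]
    ext i
    simp [Pi.basisFun_repr, Finset.sum_apply, Pi.basisFun_apply, Pi.single_apply, mul_ite]
    have h2 : ⇑((Pi.basisFun ℝ V).repr w) = w := funext fun j => Pi.basisFun_repr ℝ V w j
    rw [h2]
  constructor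
  · intro h
    obtain ⟨v, hv1, hv2⟩ := h.exists_hasEigenvector
    rw [Module.End.mem_eigenspace_iff, hco] at hv1
    exact ⟨v, hv2, hv1⟩
  · rintro ⟨v, hv0, hv⟩
    exact Module.End.hasEigenvalue_of_hasEigenvector
      ⟨Module.End.mem_eigenspace_iff.mpr (by rw [hco]; exact hv), hv0⟩

variable (G : SimpleGraph V) [DecidableRel G.Adj]

/-- The signless Laplacian. -/
def sigLap : Matrix V V ℝ := G.degMatrix ℝ + G.adjMatrix ℝ

lemma sigLap_mulVec_apply (f : V → ℝ) (v : V) :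
    (sigLap G *ᵥ f) v = (G.degree v : ℝ) * f v + ∑ w ∈ G.neighborFinset v, f w := by
  simp [sigLap, add_mulVec, SimpleGraph.degMatrix_mulVec_apply, SimpleGraph.adjMatrix_mulVec_apply]

lemma sigLap_entry_nonneg (v w : V) : 0 ≤ sigLap G v w := by
  rcases eq_or_ne v w with rfl | h
  · simp [sigLap, SimpleGraph.degMatrix, Matrix.diagonal_apply_eq]
  · simp [sigLap, SimpleGraph.degMatrix, Matrix.diagonal_apply_ne _ h]
    split <;> norm_num

lemma isHermitian_sigLap : (sigLap G).IsHermitian := by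
  rw [Matrix.IsHermitian, conjTranspose_eq_transpose_of_trivial]
  exact ((G.isSymm_degMatrix (R := ℝ)).add (G.isSymm_adjMatrix))

section Sign

variable (C : G.Coloring (Fin 2))

/-- Sign function from a 2-coloring. -/
noncomputable def sgn : V → ℝ := fun v => if C v = 0 then 1 else -1

lemma sgn_mul_self (v : V) : sgn G C v * sgn G C v = 1 := by
  unfold sgn; split <;> norm_num

lemma sgn_ne_zero (v : V) : sgn G C v ≠ 0 := by
  unfold sgn; split <;> norm_num

lemma sgn_adj {v w : V} (h : G.Adj v w) : sgn G C w = - sgn G C v := by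
  have hne : C v ≠ C w := C.valid h
  have hf : ∀ a b : Fin 2, a ≠ b → (a = 0 ∧ b = 1) ∨ (a = 1 ∧ b = 0) := by decide
  unfold sgn
  rcases hf _ _ hne with ⟨h1, h2⟩ | ⟨h1, h2⟩ <;> simp [h1, h2]

lemma sigLap_mulVec_sgn (ψ : V → ℝ) :
    sigLap G *ᵥ (fun v => sgn G C v * ψ v) = fun v => sgn G C v * ((G.lapMatrix ℝ *ᵥ ψ) v) := by
  funext v
  rw [sigLap_mulVec_apply, SimpleGraph.lapMatrix_mulVec_apply]
  have : ∀ w ∈ G.neighborFinset v, sgn G C w * ψ w = sgn G C v * (-ψ w) := by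
    intro w hw
    rw [sgn_adj G C ((G.mem_neighborFinset v w).mp hw)]
    ring
  rw [Finset.sum_congr rfl this, ← Finset.mul_sum]
  ring_nf
  rw [Finset.sum_neg_distrib]
  ring

lemma eigen_transfer {x : ℝ} {ψ : V → ℝ} (h : G.lapMatrix ℝ *ᵥ ψ = x • ψ) :
    sigLap G *ᵥ (fun v => sgn G C v * ψ v) = x • (fun v => sgn G C v * ψ v) := by
  rw [sigLap_mulVec_sgn, h]
  funext v
  simp [mul_comm]
  ring

lemma eigen_transfer' {x : ℝ} {η : V → ℝ} (h : sigLap G *ᵥ η = x • η) :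
    G.lapMatrix ℝ *ᵥ (fun v => sgn G C v * η v) = x • (fun v => sgn G C v * η v) := by
  have key := sigLap_mulVec_sgn G C (fun v => sgn G C v * η v)
  have hss : (fun v => sgn G C v * (sgn G C v * η v)) = η := by
    funext v; rw [← mul_assoc, sgn_mul_self]; ring
  rw [hss, h] at key
  funext v
  have := congrFun key v
  have h2 := congrArg (fun t => sgn G C v * t) this
  rw [← mul_assoc, sgn_mul_self, one_mul] at h2
  rw [← h2]
  simp
  ring

lemma sgn_smul_ne_zero {η : V → ℝ} (h : η ≠ 0) : (fun v => sgn G C v * η v) ≠ 0 := by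
  intro hc
  apply h
  funext v
  have := congrFun hc v
  simp only [Pi.zero_apply] at this ⊢
  rcases mul_eq_zero.mp this with h' | h'
  · exact absurd h' (sgn_ne_zero G C v)
  · exact h'

include C in
lemma spectrum_lap_eq_sigLap (x : ℝ) :
    x ∈ spectrum ℝ (G.lapMatrix ℝ) ↔ x ∈ spectrum ℝ (sigLap G) := by
  rw [mem_spectrum_iff', mem_spectrum_iff']
  constructor
  · rintro ⟨ψ, h0, h⟩
    exact ⟨_, sgn_smul_ne_zero G C h0, eigen_transfer G C h⟩
  · rintro ⟨η, h0, h⟩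
    exact ⟨_, sgn_smul_ne_zero G C h0, eigen_transfer' G C h⟩

end Sign



lemma le_of_posEigen {φ : V → ℝ} (hφ : ∀ v, 0 < φ v) {α : ℝ}
    (hQφ : sigLap G *ᵥ φ = α • φ) {x : ℝ} {η : V → ℝ} (hη0 : η ≠ 0)
    (hQη : sigLap G *ᵥ η = x • η) : x ≤ α := by
  obtain ⟨u, hu⟩ := Function.ne_iff.mp hη0
  simp only [Pi.zero_apply] at hu
  have hne : Nonempty V := ⟨u⟩
  obtain ⟨v₀, -, hmax⟩ := Finset.exists_max_image Finset.univ
    (fun w => |η w| / φ w) Finset.univ_nonempty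
  set c := |η v₀| / φ v₀ with hc
  have hcpos : 0 < c := lt_of_lt_of_le (div_pos (abs_pos.mpr hu) (hφ u)) (hmax u (mem_univ u))
  have hle : ∀ w, |η w| ≤ c * φ w := fun w =>
    (div_le_iff₀ (hφ w)).mp (hmax w (mem_univ w))
  have hv₀eq : c * φ v₀ = |η v₀| := div_mul_cancel₀ _ (ne_of_gt (hφ v₀))
  have hv₀ : 0 < |η v₀| := hv₀eq ▸ mul_pos hcpos (hφ v₀)
  set ε : ℝ := if 0 < η v₀ then 1 else -1 with hε
  set η' : V → ℝ := ε • η with hη'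
  have hQη' : sigLap G *ᵥ η' = x • η' := by
    rw [hη', mulVec_smul, hQη, smul_comm]
  have hη'v₀ : η' v₀ = |η v₀| := by
    rcases lt_trichotomy (η v₀) 0 with h | h | h
    · simp [hη', hε, not_lt.mpr (le_of_lt h), abs_of_neg h]
    · rw [h] at hv₀; simp at hv₀
    · simp [hη', hε, h, abs_of_pos h]
  have hη'le : ∀ w, η' w ≤ c * φ w := by
    intro w
    refine le_trans ?_ (hle w)
    rcases lt_or_ge 0 (η v₀) with h | h
    · simp [hη', hε, h, le_abs_self]
    · simp [hη', hε, not_lt.mpr h, neg_le_abs]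
  have key : x * η' v₀ ≤ α * η' v₀ := by
    have h1 : x * η' v₀ = (G.degree v₀ : ℝ) * η' v₀ + ∑ w ∈ G.neighborFinset v₀, η' w := by
      have := congrFun hQη' v₀
      rw [sigLap_mulVec_apply] at this
      simpa using this.symm
    have h2 : (G.degree v₀ : ℝ) * φ v₀ + ∑ w ∈ G.neighborFinset v₀, φ w = α * φ v₀ := by
      have := congrFun hQφ v₀
      rw [sigLap_mulVec_apply] at this
      simpa using this
    have h3 : ∑ w ∈ G.neighborFinset v₀, η' w ≤ ∑ w ∈ G.neighborFinset v₀, c * φ w :=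
      Finset.sum_le_sum fun w _ => hη'le w
    have h4 : η' v₀ = c * φ v₀ := by rw [hη'v₀, hv₀eq]
    calc x * η' v₀ = (G.degree v₀ : ℝ) * η' v₀ + ∑ w ∈ G.neighborFinset v₀, η' w := h1
      _ ≤ (G.degree v₀ : ℝ) * (c * φ v₀) + ∑ w ∈ G.neighborFinset v₀, c * φ w := by
          rw [h4]; exact add_le_add_right h3 _
      _ = c * ((G.degree v₀ : ℝ) * φ v₀ + ∑ w ∈ G.neighborFinset v₀, φ w) := by
          rw [mul_add, Finset.mul_sum]
          simp only [mul_comm, mul_left_comm, mul_assoc]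
      _ = c * (α * φ v₀) := by rw [h2]
      _ = α * η' v₀ := by rw [h4]; ring
  have := hη'v₀ ▸ hv₀
  exact le_of_mul_le_mul_right (by linarith [key]) (hη'v₀ ▸ hv₀)

lemma exists_posEigen (hconn : G.Connected) (C : G.Coloring (Fin 2)) {α : ℝ}
    (h1 : α ∈ spectrum ℝ (G.lapMatrix ℝ))
    (h2 : ∀ x ∈ spectrum ℝ (G.lapMatrix ℝ), x ≤ α) :
    ∃ φ : V → ℝ, (∀ v, 0 < φ v) ∧ sigLap G *ᵥ φ = α • φ := by
  obtain ⟨η, hη0, hQη⟩ := (mem_spectrum_iff' _ _).mp ((spectrum_lap_eq_sigLap G C α).mp h1)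
  set M : Matrix V V ℝ := α • (1 : Matrix V V ℝ) - sigLap G with hM
  have hMmv : ∀ f : V → ℝ, M *ᵥ f = α • f - sigLap G *ᵥ f := by
    intro f
    rw [hM, sub_mulVec, smul_mulVec, one_mulVec]
  have hMH : M.IsHermitian := by
    rw [Matrix.IsHermitian, hM, conjTranspose_sub, conjTranspose_smul, conjTranspose_one,
      (isHermitian_sigLap G).eq, star_trivial]
  have hPSD : M.PosSemidef := by
    apply hMH.posSemidef_iff_eigenvalues_nonneg.mpr
    intro i
    have hmem : hMH.eigenvalues i ∈ spectrum ℝ M := hMH.eigenvalues_mem_spectrum_real i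
    obtain ⟨v, hv0, hv⟩ := (mem_spectrum_iff' _ _).mp hmem
    have hQv : sigLap G *ᵥ v = (α - hMH.eigenvalues i) • v := by
      rw [hMmv] at hv
      funext w
      have := congrFun hv w
      simp only [Pi.sub_apply, Pi.smul_apply, smul_eq_mul] at this ⊢
      linarith
    have : α - hMH.eigenvalues i ∈ spectrum ℝ (G.lapMatrix ℝ) :=
      (spectrum_lap_eq_sigLap G C _).mpr ((mem_spectrum_iff' _ _).mpr ⟨v, hv0, hQv⟩)
    rw [Pi.zero_apply]
    linarith [h2 _ this]
  set aη : V → ℝ := fun v => |η v| with haη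
  have hdd : aη ⬝ᵥ aη = η ⬝ᵥ η := by
    unfold dotProduct
    exact Finset.sum_congr rfl fun v _ => by simp [haη, abs_mul_abs_self]
  have hQcmp : η ⬝ᵥ (sigLap G *ᵥ η) ≤ aη ⬝ᵥ (sigLap G *ᵥ aη) := by
    unfold dotProduct
    apply Finset.sum_le_sum
    intro v _
    rw [sigLap_mulVec_apply, sigLap_mulVec_apply]
    calc η v * ((G.degree v : ℝ) * η v + ∑ w ∈ G.neighborFinset v, η w)
        ≤ |η v * ((G.degree v : ℝ) * η v + ∑ w ∈ G.neighborFinset v, η w)| := le_abs_self _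
      _ = |η v| * |(G.degree v : ℝ) * η v + ∑ w ∈ G.neighborFinset v, η w| := abs_mul _ _
      _ ≤ |η v| * ((G.degree v : ℝ) * |η v| + ∑ w ∈ G.neighborFinset v, |η w|) := by
          apply mul_le_mul_of_nonneg_left _ (abs_nonneg _)
          refine le_trans (abs_add_le _ _) (add_le_add ?_ (Finset.abs_sum_le_sum_abs _ _))
          rw [abs_mul, abs_of_nonneg (by positivity : (0:ℝ) ≤ (G.degree v : ℝ))]
      _ = aη v * ((G.degree v : ℝ) * aη v + ∑ w ∈ G.neighborFinset v, aη w) := rfl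
  have hEQ : aη ⬝ᵥ (M *ᵥ aη) = 0 := by
    have hub : aη ⬝ᵥ (M *ᵥ aη) ≤ 0 := by
      rw [hMmv, dotProduct_sub, dotProduct_smul, hdd]
      have : η ⬝ᵥ (sigLap G *ᵥ η) = α * (η ⬝ᵥ η) := by
        rw [hQη, dotProduct_smul]; rfl
      simp only [smul_eq_mul]
      linarith [hQcmp]
    have hlb : 0 ≤ aη ⬝ᵥ (M *ᵥ aη) := by
      have := hPSD.dotProduct_mulVec_nonneg aη
      rwa [star_trivial] at this
    linarith
  have hM0 : M *ᵥ aη = 0 := by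
    have := (hPSD.dotProduct_mulVec_zero_iff aη).mp (by rwa [star_trivial])
    exact this
  have hQaη : sigLap G *ᵥ aη = α • aη := by
    rw [hMmv] at hM0
    funext w
    have := congrFun hM0 w
    simp only [Pi.sub_apply, Pi.smul_apply, Pi.zero_apply, smul_eq_mul] at this ⊢
    linarith
  -- positivity via connectivity
  have hzero_adj : ∀ v, aη v = 0 → ∀ w, G.Adj v w → aη w = 0 := by
    intro v hv w hw
    have := congrFun hQaη v
    rw [sigLap_mulVec_apply] at this
    simp only [Pi.smul_apply, smul_eq_mul, hv, mul_zero] at this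
    have hsum : ∑ u ∈ G.neighborFinset v, aη u = 0 := by linarith
    have := (Finset.sum_eq_zero_iff_of_nonneg (fun u _ => abs_nonneg (η u))).mp hsum
    exact this w ((G.mem_neighborFinset v w).mpr hw)
  have hzero_reach : ∀ v w : V, aη v = 0 → G.Reachable v w → aη w = 0 := by
    intro v w hv hr
    obtain ⟨p⟩ := hr
    induction p with
    | nil => exact hv
    | cons h p ih => exact ih (hzero_adj _ hv _ h)
  have hpos : ∀ v, 0 < aη v := by
    intro v
    rcases (abs_nonneg (η v)).lt_or_eq with h | h
    · exact h
    · exfalso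
      apply hη0
      funext w
      have := hzero_reach v w h.symm (hconn.preconnected v w)
      simpa [haη, abs_eq_zero] using this
  exact ⟨aη, hpos, hQaη⟩

end Aux

theorem stmt_3 {V : Type} [Fintype V] [DecidableEq V] (G : SimpleGraph V)
    [DecidableRel G.Adj] (hconn : G.Connected) (hbip : G.Colorable 2)
    (hcard : 2 ≤ Fintype.card V) (α : ℝ) (hα : 0 < α) :
    IsLapSpecRad G α ↔
      ∃ φ : V → ℝ, (∀ v, 0 < φ v) ∧
        ∀ v, (α - (G.degree v : ℝ)) * φ v = ∑ w ∈ G.neighborFinset v, φ w := by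
  have hne : Nonempty V := Fintype.card_pos_iff.mp (by omega)
  obtain ⟨C⟩ := hbip
  have hLeq : (letI := Classical.decEq V; letI := Classical.decRel G.Adj; G.lapMatrix ℝ)
      = G.lapMatrix ℝ := by
    congr! <;> exact Subsingleton.elim _ _
  have hdef : IsLapSpecRad G α =
      (α ∈ spectrum ℝ (G.lapMatrix ℝ) ∧ ∀ x ∈ spectrum ℝ (G.lapMatrix ℝ), x ≤ α) := by
    unfold IsLapSpecRad
    congr! <;> exact Subsingleton.elim _ _
  rw [hdef]
  constructor
  · rintro ⟨h1, h2⟩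
    obtain ⟨φ, hpos, hQφ⟩ := exists_posEigen G hconn C h1 h2
    refine ⟨φ, hpos, fun v => ?_⟩
    have := congrFun hQφ v
    rw [sigLap_mulVec_apply] at this
    simp only [Pi.smul_apply, smul_eq_mul] at this
    linarith
  · rintro ⟨φ, hpos, heq⟩
    have hQφ : sigLap G *ᵥ φ = α • φ := by
      funext v
      rw [sigLap_mulVec_apply]
      have := heq v
      simp only [Pi.smul_apply, smul_eq_mul]
      linarith
    have hφ0 : φ ≠ 0 := by
      intro h
      obtain ⟨v⟩ := hne
      have := hpos v
      rw [h] at this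
      simp at this
    constructor
    · exact (spectrum_lap_eq_sigLap G C α).mpr ((mem_spectrum_iff' _ _).mpr ⟨φ, hφ0, hQφ⟩)
    · intro x hx
      obtain ⟨η, hη0, hQη⟩ := (mem_spectrum_iff' _ _).mp ((spectrum_lap_eq_sigLap G C x).mp hx)
      exact le_of_posEigen G hpos hQφ hη0 hQη
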